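/- Let T be a positive random variable with T^{-ℓ} integrable, let C be a random variable with survival function Ḡ, independent of the pair (T, X) where X is a real-valued covariate, and suppose Ḡ(T) > 0 a.s. Set Y = min(T, C), δ = 1{T ≤ C}. Then for ℓ = 1, 2, the synthetic response satisfies E[ δ Y^{-ℓ} / Ḡ(Y) | X ] = E[ T^{-ℓ} | X ] almost surely. -/

import Mathlib

open MeasureTheory ProbabilityTheory Filter

noncomputable section

/-- **Synthetic data identity** : if `C` is independent of `(T, X)`, `Ḡ(t) = P(C > t)` is
continuous with `Ḡ(T) > 0` a.s., `T > 0` and `T^{-ℓ}` is integrable, then for `ℓ = 1, 2`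
`E[δ Y^{-ℓ} / Ḡ(Y) | X] = E[T^{-ℓ} | X]` almost surely, where `Y = min T C`,
`δ = 1_{T ≤ C}`. -/
theorem synthetic_data_condexp
    {Ω : Type*} [MeasurableSpace Ω] (μ : Measure Ω) [IsProbabilityMeasure μ]
    (T X C : Ω → ℝ)
    (hTmeas : Measurable T) (hXmeas : Measurable X) (hCmeas : Measurable C)
    (hTpos : ∀ᵐ ω ∂μ, 0 < T ω)
    (hInt : ∀ ℓ ∈ ({1, 2} : Set ℕ), Integrable (fun ω => (T ω) ^ (-(ℓ : ℤ))) μ)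
    -- independence of (T, X) and C
    (hTC : IndepFun (fun ω => (T ω, X ω)) C μ)
    -- Ḡ(t) = P(C > t), continuous, with Ḡ(T) > 0 a.s.
    (Gb : ℝ → ℝ) (hGb : ∀ t, Gb t = (μ {ω | t < C ω}).toReal)
    (hGcont : Continuous Gb)
    (hGT : ∀ᵐ ω ∂μ, 0 < Gb (T ω)) :
    ∀ ℓ ∈ ({1, 2} : Set ℕ),
      μ[(fun ω => (if T ω ≤ C ω then (1 : ℝ) else 0) * (min (T ω) (C ω)) ^ (-(ℓ : ℤ))
          / Gb (min (T ω) (C ω))) | MeasurableSpace.comap X inferInstance]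
        =ᵐ[μ]
      μ[(fun ω => (T ω) ^ (-(ℓ : ℤ))) | MeasurableSpace.comap X inferInstance] := by
  intro ℓ hℓ
  have hIntℓ : Integrable (fun ω => (T ω) ^ (-(ℓ : ℤ))) μ := hInt ℓ hℓ
  have hm : MeasurableSpace.comap X inferInstance ≤ _ := hXmeas.comap_le
  -- nonnegativity of Gb
  have hGnonneg : ∀ t, 0 ≤ Gb t := fun t => by rw [hGb]; exact ENNReal.toReal_nonneg
  have hGof : ∀ s : ℝ, μ {ω | s < C ω} = ENNReal.ofReal (Gb s) := fun s => by
    rw [hGb]; exact (ENNReal.ofReal_toReal (measure_ne_top μ _)).symm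
  -- μ {C ≥ t} = Gb t (no atoms, by continuity of Gb)
  have hCeq : ∀ t : ℝ, μ {ω | t ≤ C ω} = ENNReal.ofReal (Gb t) := by
    intro t
    have hmeasS : ∀ s : ℝ, MeasurableSet {ω | s < C ω} := fun s =>
      measurableSet_lt measurable_const hCmeas
    have hanti : Antitone (fun n : ℕ => {ω | t - 1 / ((n : ℝ) + 1) < C ω}) := by
      intro a b hab ω hω
      simp only [Set.mem_setOf_eq] at *
      have h1 : 1 / ((b : ℝ) + 1) ≤ 1 / ((a : ℝ) + 1) := by
        apply one_div_le_one_div_of_le (by positivity)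
        exact_mod_cast Nat.add_le_add_right hab 1
      linarith
    have hiInter : (⋂ n : ℕ, {ω | t - 1 / ((n : ℝ) + 1) < C ω}) = {ω | t ≤ C ω} := by
      ext ω
      simp only [Set.mem_iInter, Set.mem_setOf_eq]
      constructor
      · intro h
        by_contra hlt
        push_neg at hlt
        obtain ⟨n, hn⟩ := exists_nat_one_div_lt (sub_pos.mpr hlt)
        have := h n
        linarith
      · intro h n
        have h0 : (0 : ℝ) < 1 / ((n : ℝ) + 1) := by positivity
        linarith
    have h1 := tendsto_measure_iInter_atTop
      (fun n => (hmeasS _).nullMeasurableSet) hanti ⟨0, measure_ne_top μ _⟩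
    rw [hiInter] at h1
    have h2 : Tendsto (fun n : ℕ => μ {ω | t - 1 / ((n : ℝ) + 1) < C ω}) atTop
        (nhds (ENNReal.ofReal (Gb t))) := by
      simp only [hGof]
      refine (ENNReal.continuous_ofReal.tendsto _).comp ?_
      refine (hGcont.tendsto t).comp ?_
      have hlim : Tendsto (fun n : ℕ => 1 / ((n : ℝ) + 1)) atTop (nhds 0) :=
        tendsto_one_div_add_atTop_nhds_zero_nat
      simpa using tendsto_const_nhds.sub hlim
    exact tendsto_nhds_unique h1 h2
  -- product structure
  set ν : Measure (ℝ × ℝ) := μ.map (fun ω => (T ω, X ω)) with hν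
  set κ : Measure ℝ := μ.map C with hκ
  haveI : IsProbabilityMeasure κ := Measure.isProbabilityMeasure_map hCmeas.aemeasurable
  haveI : IsProbabilityMeasure ν :=
    Measure.isProbabilityMeasure_map (hTmeas.prodMk hXmeas).aemeasurable
  have hprod : μ.map (fun ω => ((T ω, X ω), C ω)) = ν.prod κ :=
    (indepFun_iff_map_prod_eq_prod_map_map (hTmeas.prodMk hXmeas).aemeasurable
      hCmeas.aemeasurable).mp hTC
  have hκC : ∀ t : ℝ, κ (Set.Ici t) = ENNReal.ofReal (Gb t) := by
    intro t
    rw [hκ, Measure.map_apply hCmeas measurableSet_Ici]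
    exact hCeq t
  -- key identity : ∫ ψ(T,X) δ = ∫ ψ(T,X) Gb(T)
  have key : ∀ ψ : ℝ × ℝ → ENNReal, Measurable ψ →
      ∫⁻ ω, ψ (T ω, X ω) * (if T ω ≤ C ω then 1 else 0) ∂μ
        = ∫⁻ ω, ψ (T ω, X ω) * ENNReal.ofReal (Gb (T ω)) ∂μ := by
    intro ψ hψ
    have hΦ : Measurable (fun p : (ℝ × ℝ) × ℝ => ψ p.1 * (if p.1.1 ≤ p.2 then 1 else 0)) := by
      refine (hψ.comp measurable_fst).mul ?_
      refine Measurable.ite ?_ measurable_const measurable_const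
      exact measurableSet_le (measurable_fst.comp measurable_fst) measurable_snd
    calc ∫⁻ ω, ψ (T ω, X ω) * (if T ω ≤ C ω then 1 else 0) ∂μ
        = ∫⁻ p, ψ p.1 * (if p.1.1 ≤ p.2 then 1 else 0)
            ∂(μ.map fun ω => ((T ω, X ω), C ω)) := by
          rw [lintegral_map hΦ ((hTmeas.prodMk hXmeas).prodMk hCmeas)]
      _ = ∫⁻ a, ∫⁻ c, ψ a * (if a.1 ≤ c then 1 else 0) ∂κ ∂ν := by
          rw [hprod, lintegral_prod _ hΦ.aemeasurable]
      _ = ∫⁻ a, ψ a * ENNReal.ofReal (Gb a.1) ∂ν := by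
          refine lintegral_congr fun a => ?_
          rw [lintegral_const_mul _ (Measurable.ite measurableSet_Ici measurable_const
            measurable_const)]
          congr 1
          have hfun : (fun c : ℝ => (if a.1 ≤ c then (1 : ENNReal) else 0))
              = (Set.Ici a.1).indicator (fun _ => 1) := by
            ext c; simp [Set.indicator_apply, Set.mem_Ici]
          rw [hfun, lintegral_indicator measurableSet_Ici, setLIntegral_one, hκC]
      _ = ∫⁻ ω, ψ (T ω, X ω) * ENNReal.ofReal (Gb (T ω)) ∂μ := by
          rw [hν]
          exact lintegral_map (f := fun a : ℝ × ℝ => ψ a * ENNReal.ofReal (Gb a.1))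
            (hψ.mul (ENNReal.measurable_ofReal.comp
              (hGcont.measurable.comp measurable_fst))) (hTmeas.prodMk hXmeas)
  -- the synthetic response
  set F : Ω → ℝ := fun ω => (if T ω ≤ C ω then (1 : ℝ) else 0) * (min (T ω) (C ω)) ^ (-(ℓ : ℤ))
      / Gb (min (T ω) (C ω)) with hF_def
  have hzpow : Measurable (fun x : ℝ => x ^ (-(ℓ : ℤ))) := by
    have : (fun x : ℝ => x ^ (-(ℓ : ℤ))) = fun x : ℝ => (x ^ ℓ)⁻¹ := by
      funext x; rw [zpow_neg, zpow_natCast]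
    rw [this]
    exact (measurable_id.pow_const ℓ).inv
  have hFmeas : Measurable F := by
    refine Measurable.div ?_ (hGcont.measurable.comp (hTmeas.min hCmeas))
    exact (Measurable.ite (measurableSet_le hTmeas hCmeas) measurable_const
      measurable_const).mul (hzpow.comp (hTmeas.min hCmeas))
  have hFnn : 0 ≤ᵐ[μ] F := by
    filter_upwards [hTpos] with ω hT
    by_cases h : T ω ≤ C ω
    · simp only [hF_def, if_pos h]
      exact div_nonneg (by rw [one_mul]; exact zpow_nonneg (le_min hT.le (hT.trans_le h).le) _)
        (hGnonneg _)
    · simp [hF_def, if_neg h]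
  have hTnn : 0 ≤ᵐ[μ] fun ω => (T ω) ^ (-(ℓ : ℤ)) := by
    filter_upwards [hTpos] with ω hT
    exact zpow_nonneg hT.le _
  -- key2 : lintegral identity over X-measurable sets
  have key2 : ∀ B : Set ℝ, MeasurableSet B →
      ∫⁻ ω in X ⁻¹' B, ENNReal.ofReal (F ω) ∂μ
        = ∫⁻ ω in X ⁻¹' B, ENNReal.ofReal ((T ω) ^ (-(ℓ : ℤ))) ∂μ := by
    intro B hB
    have hXB : MeasurableSet (X ⁻¹' B) := hXmeas hB
    set ψB : ℝ × ℝ → ENNReal := fun p =>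
      B.indicator (fun _ => (1 : ENNReal)) p.2 * ENNReal.ofReal (p.1 ^ (-(ℓ : ℤ)) / Gb p.1)
      with hψB_def
    have hψBmeas : Measurable ψB := by
      refine Measurable.mul ?_ ?_
      · exact (measurable_const.indicator hB).comp measurable_snd
      · exact ENNReal.measurable_ofReal.comp
          ((hzpow.comp measurable_fst).div (hGcont.measurable.comp measurable_fst))
    have hpt1 : ∀ ω, (X ⁻¹' B).indicator (fun ω => ENNReal.ofReal (F ω)) ω
        = ψB (T ω, X ω) * (if T ω ≤ C ω then 1 else 0) := by
      intro ω
      by_cases hX : X ω ∈ B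
      · have hXp : ω ∈ X ⁻¹' B := hX
        by_cases h : T ω ≤ C ω
        · simp only [Set.indicator_of_mem hXp, hψB_def, Set.indicator_of_mem hX, hF_def,
            if_pos h, min_eq_left h, one_mul, mul_one]
        · simp [hψB_def, Set.indicator_of_mem hXp, Set.indicator_of_mem hX, hF_def,
            if_neg h]
      · have hX' : ω ∉ X ⁻¹' B := hX
        simp [Set.indicator_of_notMem hX', hψB_def, Set.indicator_of_notMem hX]
    have hpt2 : ∀ᵐ ω ∂μ, ψB (T ω, X ω) * ENNReal.ofReal (Gb (T ω))
        = (X ⁻¹' B).indicator (fun ω => ENNReal.ofReal ((T ω) ^ (-(ℓ : ℤ)))) ω := by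
      filter_upwards [hTpos, hGT] with ω hT hG
      by_cases hX : X ω ∈ B
      · have hXp : ω ∈ X ⁻¹' B := hX
        have hnn : 0 ≤ (T ω) ^ (-(ℓ : ℤ)) / Gb (T ω) :=
          div_nonneg (zpow_nonneg hT.le _) (hGnonneg _)
        simp only [hψB_def, Set.indicator_of_mem hX, Set.indicator_of_mem hXp, one_mul,
          mul_assoc, ← ENNReal.ofReal_mul hnn, div_mul_cancel₀ _ (ne_of_gt hG)]
      · have hX' : ω ∉ X ⁻¹' B := hX
        simp [hψB_def, Set.indicator_of_notMem hX', Set.indicator_of_notMem hX]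
    calc ∫⁻ ω in X ⁻¹' B, ENNReal.ofReal (F ω) ∂μ
        = ∫⁻ ω, (X ⁻¹' B).indicator (fun ω => ENNReal.ofReal (F ω)) ω ∂μ := by
          rw [lintegral_indicator hXB]
      _ = ∫⁻ ω, ψB (T ω, X ω) * (if T ω ≤ C ω then 1 else 0) ∂μ :=
          lintegral_congr hpt1
      _ = ∫⁻ ω, ψB (T ω, X ω) * ENNReal.ofReal (Gb (T ω)) ∂μ := key ψB hψBmeas
      _ = ∫⁻ ω, (X ⁻¹' B).indicator (fun ω => ENNReal.ofReal ((T ω) ^ (-(ℓ : ℤ)))) ω ∂μ :=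
          lintegral_congr_ae hpt2
      _ = ∫⁻ ω in X ⁻¹' B, ENNReal.ofReal ((T ω) ^ (-(ℓ : ℤ))) ∂μ := by
          rw [lintegral_indicator hXB]
  -- integrability of F
  have hFint : Integrable F μ := by
    refine ⟨hFmeas.aestronglyMeasurable, (hasFiniteIntegral_iff_ofReal hFnn).mpr ?_⟩
    have h := key2 Set.univ MeasurableSet.univ
    simp only [Set.preimage_univ, Measure.restrict_univ] at h
    rw [h]
    exact (hasFiniteIntegral_iff_ofReal hTnn).mp hIntℓ.hasFiniteIntegral
  -- set integral identity
  have hsetInt : ∀ s : Set Ω, MeasurableSet[MeasurableSpace.comap X inferInstance] s →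
      ∫ ω in s, F ω ∂μ = ∫ ω in s, (T ω) ^ (-(ℓ : ℤ)) ∂μ := by
    rintro s ⟨B, hB, rfl⟩
    have hXB : MeasurableSet (X ⁻¹' B) := hXmeas hB
    rw [integral_eq_lintegral_of_nonneg_ae (ae_restrict_of_ae hFnn)
        (hFmeas.aestronglyMeasurable.restrict),
      integral_eq_lintegral_of_nonneg_ae (ae_restrict_of_ae hTnn)
        ((hzpow.comp hTmeas).aestronglyMeasurable.restrict),
      key2 B hB]
  -- conclude by uniqueness of conditional expectation
  have hcond : μ[F|MeasurableSpace.comap X inferInstance] =ᵐ[μ] μ[(fun ω => (T ω) ^ (-(ℓ : ℤ)))|MeasurableSpace.comap X inferInstance] := by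
    refine ae_eq_condExp_of_forall_setIntegral_eq hm hIntℓ
      (fun s _ _ => integrable_condExp.integrableOn)
      (fun s hs hμs => ?_)
      stronglyMeasurable_condExp.aestronglyMeasurable
    rw [setIntegral_condExp hm hFint hs]
    exact hsetInt s hs
  exact hcond
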